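/- Let A, B be positive definite n×n complex matrices, λ ∈ (0,1], and T_λ(A|B) = (A #_λ B - A)/λ where A #_λ B = A^(1/2)(A^(-1/2) B A^(-1/2))^λ A^(1/2). Then A - A B⁻¹ A ≤ T_λ(A|B) ≤ B - A in the Loewner order, and T_λ(A|B) = 0 if and only if A = B. -/

import Mathlib

open Matrix
open scoped ComplexOrder

attribute [local instance] Matrix.frobeniusNormedAddCommGroup Matrix.frobeniusNormedSpace

/-- Matrix logarithm via the continuous functional calculus (spectral theorem). -/
noncomputable def mlog {n : Type*} [Fintype n] [DecidableEq n] (A : Matrix n n ℂ) :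
    Matrix n n ℂ := cfc Real.log A

/-- Real power of a matrix via the continuous functional calculus (spectral theorem). -/
noncomputable def mpow {n : Type*} [Fintype n] [DecidableEq n] (A : Matrix n n ℂ) (r : ℝ) :
    Matrix n n ℂ := cfc (fun x : ℝ => x ^ r) A

section Aux

variable {n : Type*} [Fintype n] [DecidableEq n]

lemma contOn (A : Matrix n n ℂ) (f : ℝ → ℝ) : ContinuousOn f (spectrum ℝ A) :=
  Set.Finite.continuousOn Matrix.finite_real_spectrum f

lemma spectrum_pos_of_posDef {A : Matrix n n ℂ} (hA : A.PosDef) :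
    ∀ x ∈ spectrum ℝ A, 0 < x := by
  rw [Matrix.IsHermitian.spectrum_real_eq_range_eigenvalues hA.isHermitian]
  rintro x ⟨i, rfl⟩
  exact hA.eigenvalues_pos i

lemma cfc_posSemidef {A : Matrix n n ℂ} (hA : A.IsHermitian) {f : ℝ → ℝ}
    (hf : ∀ x ∈ spectrum ℝ A, 0 ≤ f x) : (cfc f A).PosSemidef := by
  rw [hA.cfc_eq, Matrix.IsHermitian.cfc]
  rw [Unitary.conjStarAlgAut_apply, Matrix.star_eq_conjTranspose]
  apply Matrix.PosSemidef.mul_mul_conjTranspose_same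
  refine Matrix.posSemidef_diagonal_iff.mpr fun i => ?_
  have := hf _ (hA.eigenvalues_mem_spectrum_real i)
  simpa [RCLike.ofReal_nonneg] using this

-- scalar inequalities
lemma scalar_up {x l : ℝ} (hx : 0 < x) (hl : 0 < l) (hl1 : l ≤ 1) :
    l⁻¹ * (x ^ l - 1) ≤ x - 1 := by
  have h : x ^ l ≤ 1 + l * (x - 1) := by
    have := rpow_one_add_le_one_add_mul_self (s := x - 1) (by linarith) hl.le hl1
    rwa [show (1 : ℝ) + (x - 1) = x by ring] at this
  rw [inv_mul_le_iff₀ hl]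
  linarith

lemma scalar_low {x l : ℝ} (hx : 0 < x) (hl : 0 < l) (hl1 : l ≤ 1) :
    1 - x⁻¹ ≤ l⁻¹ * (x ^ l - 1) := by
  have hx' : (0 : ℝ) < x⁻¹ := inv_pos.2 hx
  have h : x⁻¹ ^ l ≤ 1 + l * (x⁻¹ - 1) := by
    have := rpow_one_add_le_one_add_mul_self (s := x⁻¹ - 1) (by linarith) hl.le hl1
    rwa [show (1 : ℝ) + (x⁻¹ - 1) = x⁻¹ by ring] at this
  set v : ℝ := 1 + l * (x⁻¹ - 1) with hv_def
  have hvpos : 0 < v := lt_of_lt_of_le (Real.rpow_pos_of_pos hx' l) h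
  have h1 : v⁻¹ ≤ x ^ l := by
    have : v⁻¹ ≤ (x⁻¹ ^ l)⁻¹ := by
      exact inv_anti₀ (Real.rpow_pos_of_pos hx' l) h
    rwa [Real.inv_rpow hx.le, inv_inv] at this
  have h2 : 2 - v ≤ v⁻¹ := by
    rw [← one_div, le_div_iff₀ hvpos]
    nlinarith [sq_nonneg (v - 1)]
  have hkey : 1 + l * (1 - x⁻¹) ≤ x ^ l := by
    have : 1 + l * (1 - x⁻¹) = 2 - v := by rw [hv_def]; ring
    linarith
  have hstep : l * (1 - x⁻¹) ≤ x ^ l - 1 := by linarith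
  calc 1 - x⁻¹ = l⁻¹ * (l * (1 - x⁻¹)) := by field_simp
    _ ≤ l⁻¹ * (x ^ l - 1) := mul_le_mul_of_nonneg_left hstep (inv_pos.2 hl).le

lemma mem_spectrum_one {x : ℝ} (hx : x ∈ spectrum ℝ (1 : Matrix n n ℂ)) : x = 1 := by
  by_contra h
  rw [spectrum.mem_iff] at hx
  apply hx
  have he : algebraMap ℝ (Matrix n n ℂ) x - 1 = algebraMap ℝ (Matrix n n ℂ) (x - 1) := by
    rw [map_sub, _root_.map_one]
  rw [he]
  exact (IsUnit.mk0 (x - 1) (sub_ne_zero.2 h)).map (algebraMap ℝ (Matrix n n ℂ))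

end Aux

theorem stmt_19 {n : Type*} [Fintype n] [DecidableEq n]
    (A B : Matrix n n ℂ) (hA : A.PosDef) (hB : B.PosDef) (l : ℝ) (hl : 0 < l) (hl1 : l ≤ 1) :
    ((l⁻¹ • (mpow A (1/2) * mpow (mpow A (-(1/2)) * B * mpow A (-(1/2))) l * mpow A (1/2) - A)) -
        (A - A * B⁻¹ * A)).PosSemidef ∧
      ((B - A) -
        l⁻¹ • (mpow A (1/2) * mpow (mpow A (-(1/2)) * B * mpow A (-(1/2))) l * mpow A (1/2) - A)).PosSemidef ∧
      (l⁻¹ • (mpow A (1/2) * mpow (mpow A (-(1/2)) * B * mpow A (-(1/2))) l * mpow A (1/2) - A) = 0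
        ↔ A = B) := by
  classical
  set S : Matrix n n ℂ := mpow A (1/2) with hS_def
  set T : Matrix n n ℂ := mpow A (-(1/2)) with hT_def
  have hAh : A.IsHermitian := hA.isHermitian
  have hApos := spectrum_pos_of_posDef hA
  have hSh : S.IsHermitian := cfc_predicate _ A
  have hTh : T.IsHermitian := cfc_predicate _ A
  -- S * S = A
  have hSS : S * S = A := by
    rw [hS_def, mpow, ← cfc_mul _ _ A (contOn A _) (contOn A _)]
    conv_rhs => rw [show A = cfc (id : ℝ → ℝ) A from (cfc_id ℝ A hAh).symm]
    apply cfc_congr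
    intro x hx
    have hx' := hApos x hx
    show x ^ (1/2 : ℝ) * x ^ (1/2 : ℝ) = id x
    rw [← Real.rpow_add hx']
    norm_num
  -- T * S = 1 and S * T = 1
  have hTS : T * S = 1 := by
    rw [hT_def, hS_def, mpow, mpow, ← cfc_mul _ _ A (contOn A _) (contOn A _)]
    rw [show (1 : Matrix n n ℂ) = cfc (fun _ : ℝ => (1:ℝ)) A from (cfc_const_one ℝ A hAh).symm]
    apply cfc_congr
    intro x hx
    have hx' := hApos x hx
    show x ^ (-(1/2) : ℝ) * x ^ (1/2 : ℝ) = 1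
    rw [← Real.rpow_add hx']
    norm_num
  have hST : S * T = 1 := by
    rw [hS_def, hT_def, mpow, mpow, ← cfc_mul _ _ A (contOn A _) (contOn A _)]
    rw [show (1 : Matrix n n ℂ) = cfc (fun _ : ℝ => (1:ℝ)) A from (cfc_const_one ℝ A hAh).symm]
    apply cfc_congr
    intro x hx
    have hx' := hApos x hx
    show x ^ (1/2 : ℝ) * x ^ (-(1/2) : ℝ) = 1
    rw [← Real.rpow_add hx']
    norm_num
  set C : Matrix n n ℂ := T * B * T with hC_def
  -- C is positive definite
  have hCpos : C.PosDef := by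
    refine Matrix.PosDef.of_dotProduct_mulVec_pos ?_ ?_
    · rw [hC_def]
      have := Matrix.isHermitian_conjTranspose_mul_mul T hB.isHermitian
      rwa [hTh.eq] at this
    · intro x hx
      have hTx : T *ᵥ x ≠ 0 := by
        intro h0
        apply hx
        have : (S * T) *ᵥ x = S *ᵥ (T *ᵥ x) := by rw [mulVec_mulVec]
        rw [hST, one_mulVec, h0, mulVec_zero] at this
        exact this
      have := hB.dotProduct_mulVec_pos hTx
      rw [hC_def]
      calc 0 < star (T *ᵥ x) ⬝ᵥ (B *ᵥ (T *ᵥ x)) := this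
        _ = star x ⬝ᵥ ((T * B * T) *ᵥ x) := by
            rw [show T * B * T = Tᴴ * B * T from by rw [hTh.eq]]
            conv_rhs => rw [← Matrix.mulVec_mulVec, ← Matrix.mulVec_mulVec,
              Matrix.dotProduct_mulVec, ← Matrix.star_mulVec]
  have hCh : C.IsHermitian := hCpos.isHermitian
  have hCspec := spectrum_pos_of_posDef hCpos
  -- B = S * C * S
  have hB_eq : S * C * S = B := by
    rw [hC_def]
    calc S * (T * B * T) * S = (S * T) * B * (T * S) := by noncomm_ring
      _ = B := by rw [hST, hTS, one_mul, mul_one]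
  -- B * B⁻¹ = 1
  have hBinv : B * B⁻¹ = 1 :=
    Matrix.mul_nonsing_inv B (Matrix.isUnit_iff_isUnit_det B |>.mp hB.isUnit)
  -- C⁻¹ = cfc (·⁻¹) C = S * B⁻¹ * S
  have hCinv_cfc : C⁻¹ = cfc (fun x : ℝ => x⁻¹) C := by
    apply Matrix.inv_eq_right_inv
    calc C * cfc (fun x : ℝ => x⁻¹) C
        = cfc (id : ℝ → ℝ) C * cfc (fun x : ℝ => x⁻¹) C :=
          congrArg (fun M => M * cfc (fun x : ℝ => x⁻¹) C) (cfc_id ℝ C hCh).symm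
      _ = cfc (fun x : ℝ => id x * x⁻¹) C := (cfc_mul _ _ C (contOn C _) (contOn C _)).symm
      _ = cfc (fun _ : ℝ => (1:ℝ)) C := cfc_congr fun x hx => mul_inv_cancel₀ (hCspec x hx).ne'
      _ = 1 := cfc_const_one ℝ C hCh
  have hCinv : C⁻¹ = S * B⁻¹ * S := by
    apply Matrix.inv_eq_right_inv
    rw [hC_def]
    calc T * B * T * (S * B⁻¹ * S) = T * B * (T * S) * B⁻¹ * S := by noncomm_ring
      _ = T * (B * B⁻¹) * S := by rw [hTS]; noncomm_ring
      _ = T * S := by rw [hBinv, mul_one]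
      _ = 1 := hTS
  -- expressing the three matrices as S * cfc g C * S
  have keyMid : l⁻¹ • (S * mpow C l * S - A) =
      S * cfc (fun x : ℝ => l⁻¹ * (x ^ l - 1)) C * S := by
    have h1 : cfc (fun x : ℝ => l⁻¹ * (x ^ l - 1)) C = l⁻¹ • (mpow C l - 1) := by
      rw [mpow, show (1 : Matrix n n ℂ) = cfc (fun _ : ℝ => (1:ℝ)) C from
        (cfc_const_one ℝ C hCh).symm,
        ← cfc_sub _ _ C (contOn C _) (contOn C _)]
      exact cfc_const_mul l⁻¹ _ C (contOn C _)
    rw [h1, mul_smul_comm, smul_mul_assoc]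
    congr 1
    rw [mul_sub, sub_mul, mul_one, hSS]
  have keyUp : B - A = S * cfc (fun x : ℝ => x - 1) C * S := by
    have h1 : cfc (fun x : ℝ => x - 1) C = C - 1 := by
      conv_rhs => rw [show C = cfc (id : ℝ → ℝ) C from (cfc_id ℝ C hCh).symm,
        show (1 : Matrix n n ℂ) = cfc (fun _ : ℝ => (1:ℝ)) C from (cfc_const_one ℝ C hCh).symm]
      exact cfc_sub _ _ C (contOn C _) (contOn C _)
    rw [h1, mul_sub, sub_mul, mul_one, hSS, hB_eq]
  have keyLow : A - A * B⁻¹ * A = S * cfc (fun x : ℝ => 1 - x⁻¹) C * S := by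
    have h1 : cfc (fun x : ℝ => 1 - x⁻¹) C = 1 - C⁻¹ := by
      rw [hCinv_cfc]
      conv_rhs => rw [show (1 : Matrix n n ℂ) = cfc (fun _ : ℝ => (1:ℝ)) C from
        (cfc_const_one ℝ C hCh).symm]
      exact cfc_sub _ _ C (contOn C _) (contOn C _)
    have h2 : A * B⁻¹ * A = S * C⁻¹ * S := by
      rw [hCinv, ← hSS]
      noncomm_ring
    rw [h1, mul_sub, sub_mul, mul_one, hSS, h2]
  -- conjugation preserves PosSemidef
  have conj_psd : ∀ M : Matrix n n ℂ, M.PosSemidef → (S * M * S).PosSemidef := by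
    intro M hM
    have := hM.mul_mul_conjTranspose_same S
    rwa [hSh.eq] at this
  -- part 1
  have part1 : ((l⁻¹ • (S * mpow C l * S - A)) - (A - A * B⁻¹ * A)).PosSemidef := by
    rw [keyMid, keyLow, ← sub_mul, ← mul_sub,
      ← cfc_sub _ _ C (contOn C _) (contOn C _)]
    apply conj_psd
    apply cfc_posSemidef hCh
    intro x hx
    have := scalar_low (hCspec x hx) hl hl1
    linarith
  have part2 : ((B - A) - l⁻¹ • (S * mpow C l * S - A)).PosSemidef := by
    rw [keyMid, keyUp, ← sub_mul, ← mul_sub,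
      ← cfc_sub _ _ C (contOn C _) (contOn C _)]
    apply conj_psd
    apply cfc_posSemidef hCh
    intro x hx
    have := scalar_up (hCspec x hx) hl hl1
    linarith
  refine ⟨part1, part2, ?_, ?_⟩
  · -- T_l = 0 → A = B
    intro h
    rw [keyMid] at h
    set f : ℝ → ℝ := fun x => l⁻¹ * (x ^ l - 1) with hf_def
    have hX : cfc f C = 0 := by
      have h2 := congrArg (fun M => T * M * T) h
      simp only [mul_zero, zero_mul] at h2
      calc cfc f C = (T * S) * cfc f C * (S * T) := by rw [hTS, hST, one_mul, mul_one]
        _ = T * (S * cfc f C * S) * T := by noncomm_ring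
        _ = 0 := h2
    set U : Matrix n n ℂ := (Matrix.IsHermitian.eigenvectorUnitary hCh : Matrix n n ℂ) with hU_def
    have hU1 : star U * U = 1 :=
      Matrix.mem_unitaryGroup_iff'.mp (Matrix.IsHermitian.eigenvectorUnitary hCh).2
    have hU2 : U * star U = 1 :=
      Matrix.mem_unitaryGroup_iff.mp (Matrix.IsHermitian.eigenvectorUnitary hCh).2
    rw [hCh.cfc_eq, Matrix.IsHermitian.cfc] at hX
    have hD : Matrix.diagonal (RCLike.ofReal ∘ f ∘ hCh.eigenvalues : n → ℂ) = 0 := by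
      have h2 := congrArg (fun M => star U * M * U) hX
      simp only [mul_zero, zero_mul] at h2
      calc Matrix.diagonal (RCLike.ofReal ∘ f ∘ hCh.eigenvalues : n → ℂ)
          = (star U * U) * Matrix.diagonal (RCLike.ofReal ∘ f ∘ hCh.eigenvalues : n → ℂ)
            * (star U * U) := by rw [hU1, one_mul, mul_one]
        _ = star U * (U * Matrix.diagonal (RCLike.ofReal ∘ f ∘ hCh.eigenvalues : n → ℂ)
            * star U) * U := by noncomm_ring
        _ = 0 := h2
    have heig : ∀ i, hCh.eigenvalues i = 1 := by
      intro i
      have h0 : f (hCh.eigenvalues i) = 0 := by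
        have := congrFun (congrFun hD i) i
        simp only [Matrix.diagonal_apply_eq, Function.comp_apply, Matrix.zero_apply] at this
        exact RCLike.ofReal_eq_zero.mp this
      have hxpos : 0 < hCh.eigenvalues i := hCpos.eigenvalues_pos i
      rw [hf_def] at h0
      simp only [mul_eq_zero, inv_eq_zero, sub_eq_zero] at h0
      have hxl : (hCh.eigenvalues i) ^ l = 1 := by
        rcases h0 with h0 | h0
        · exact absurd h0 hl.ne'
        · exact h0
      have hre : hCh.eigenvalues i = ((hCh.eigenvalues i) ^ l) ^ l⁻¹ := by
        rw [← Real.rpow_mul hxpos.le, mul_inv_cancel₀ hl.ne', Real.rpow_one]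
      rw [hre, hxl, Real.one_rpow]
    have hfun : (RCLike.ofReal ∘ hCh.eigenvalues : n → ℂ) = fun _ => (1 : ℂ) :=
      funext fun i => by simp [heig i]
    have hdiag : Matrix.diagonal (RCLike.ofReal ∘ hCh.eigenvalues : n → ℂ) = 1 := by
      rw [hfun, Matrix.diagonal_one]
    have hC1 : C = 1 := by
      rw [hCh.spectral_theorem, hdiag, Unitary.conjStarAlgAut_apply, mul_one]
      exact hU2
    have : S * C * S = S * 1 * S := by rw [hC1]
    rw [hB_eq, mul_one, hSS] at this
    exact this.symm
  · -- A = B → T_l = 0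
    intro h
    have hC1 : C = 1 := by
      rw [hC_def, ← h, ← hSS]
      calc T * (S * S) * T = (T * S) * (S * T) := by noncomm_ring
        _ = 1 := by rw [hTS, hST, one_mul]
    rw [keyMid, hC1]
    have : cfc (fun x : ℝ => l⁻¹ * (x ^ l - 1)) (1 : Matrix n n ℂ) = 0 := by
      rw [show (0 : Matrix n n ℂ) = cfc (fun _ : ℝ => (0:ℝ)) (1 : Matrix n n ℂ) from
        (cfc_const_zero ℝ (1 : Matrix n n ℂ)).symm]
      apply cfc_congr
      intro x hx
      show l⁻¹ * (x ^ l - 1) = 0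
      have hx1 := mem_spectrum_one hx
      subst hx1
      simp [Real.one_rpow]
    rw [this, mul_zero, zero_mul]
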